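/- Let N ≥ 2 and let T be an order-N real tensor with dimensions s₁×⋯×s_N. Then there exist orthogonal matrices Q₂ ∈ ℝ^{s₂×s₂}, …, Q_N ∈ ℝ^{s_N×s_N} such that the tensor V = T ×₂ Q₂ ×₃ ⋯ ×_N Q_N satisfies ‖V‖₂ = ‖T‖₂ and I(V) = I(T) (hence κ(V) = κ(T) whenever I(T) > 0), and the first fiber v ∈ ℝ^{s₁} of V, defined by v(i) = V(i,1,…,1), satisfies ‖v‖₂ = I(T). -/

import Mathlib

open scoped BigOperators

/-- Euclidean (ℓ²) norm of a vector. -/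
noncomputable def vnorm {n : ℕ} (v : Fin n → ℝ) : ℝ := Real.sqrt (∑ i, v i ^ 2)

/-- Frobenius norm: the ℓ² norm of all entries. -/
noncomputable def fnorm {ι : Type*} [Fintype ι] (T : ι → ℝ) : ℝ := Real.sqrt (∑ i, T i ^ 2)

/-- Matrix–vector product. -/
noncomputable def matvec {m n : ℕ} (M : Fin m → Fin n → ℝ) (x : Fin n → ℝ) : Fin m → ℝ :=
  fun i => ∑ j, M i j * x j

/-- Matrix–matrix product. -/
noncomputable def matmul {m n p : ℕ} (A : Fin m → Fin n → ℝ) (B : Fin n → Fin p → ℝ) :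
    Fin m → Fin p → ℝ :=
  fun i j => ∑ k, A i k * B k j

/-- Matrix spectral norm. -/
noncomputable def mnorm {m n : ℕ} (M : Fin m → Fin n → ℝ) : ℝ :=
  sSup {r | ∃ x : Fin n → ℝ, vnorm x = 1 ∧ r = vnorm (matvec M x)}

/-- `I(M)`: the infimum of `‖Mx‖₂` over unit vectors `x`. -/
noncomputable def minf {m n : ℕ} (M : Fin m → Fin n → ℝ) : ℝ :=
  sInf {r | ∃ x : Fin n → ℝ, vnorm x = 1 ∧ r = vnorm (matvec M x)}

/-- Matrix Frobenius norm. -/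
noncomputable def mfro {m n : ℕ} (M : Fin m → Fin n → ℝ) : ℝ :=
  Real.sqrt (∑ i, ∑ j, M i j ^ 2)

/-- The multilinear map `g_T` associated to an order-`(d+1)` tensor `T`;
mode `0` is the output mode, modes `1,…,d` are the input modes. -/
noncomputable def gmap {d : ℕ} {s : Fin (d+1) → ℕ} (T : (∀ i, Fin (s i)) → ℝ)
    (x : ∀ i, Fin (s i) → ℝ) : Fin (s 0) → ℝ :=
  fun i₁ => ∑ j : (∀ i, Fin (s i)),
    if j 0 = i₁ then T j * ∏ k ∈ Finset.univ.erase (0 : Fin (d+1)), x k (j k) else 0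

/-- The inputs `x i`, `i ≠ 0`, are all unit vectors. -/
def unitInputs {d : ℕ} {s : Fin (d+1) → ℕ} (x : ∀ i, Fin (s i) → ℝ) : Prop :=
  ∀ i : Fin (d+1), i ≠ 0 → vnorm (x i) = 1

/-- Tensor spectral norm: supremum of `‖g_T(x₂,…,x_N)‖₂` over unit inputs. -/
noncomputable def tnorm {d : ℕ} {s : Fin (d+1) → ℕ} (T : (∀ i, Fin (s i)) → ℝ) : ℝ :=
  sSup {r | ∃ x : (∀ i, Fin (s i) → ℝ), unitInputs x ∧ r = vnorm (gmap T x)}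

/-- `I(T)`: infimum of `‖g_T(x₂,…,x_N)‖₂` over unit inputs. -/
noncomputable def tinf {d : ℕ} {s : Fin (d+1) → ℕ} (T : (∀ i, Fin (s i)) → ℝ) : ℝ :=
  sInf {r | ∃ x : (∀ i, Fin (s i) → ℝ), unitInputs x ∧ r = vnorm (gmap T x)}

/-- Tensor condition number `κ(T) = ‖T‖₂ / I(T)`. -/
noncomputable def tcond {d : ℕ} {s : Fin (d+1) → ℕ} (T : (∀ i, Fin (s i)) → ℝ) : ℝ :=
  tnorm T / tinf T

/-- Dimensions after replacing the size of mode `n` by `J`. -/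
def repl {d : ℕ} (s : Fin (d+1) → ℕ) (n : Fin (d+1)) (J : ℕ) : Fin (d+1) → ℕ :=
  fun i => if i = n then J else s i

/-- Mode-`n` product `T ×ₙ A` with a matrix `A : Fin J → Fin (s n) → ℝ`:
`(T ×ₙ A)(i₁,…,a,…,i_N) = ∑ₖ T(i₁,…,k,…,i_N) A(a,k)`. -/
noncomputable def modeProd {d : ℕ} {s : Fin (d+1) → ℕ} (T : (∀ i, Fin (s i)) → ℝ)
    (n : Fin (d+1)) {J : ℕ} (A : Fin J → Fin (s n) → ℝ) :
    (∀ i, Fin (repl s n J i)) → ℝ :=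
  fun j => ∑ k : Fin (s n),
    T (fun i => if h : i = n then Fin.cast (congrArg s h.symm) k
        else Fin.cast (show repl s n J i = s i by simp [repl, h]) (j i)) *
      A (Fin.cast (show repl s n J n = J by simp [repl]) (j n)) k

/-- Multilinear transformation of a tensor: `multiProd X B = X ×₁ B₁ ×₂ ⋯ ×_N B_N`. -/
noncomputable def multiProd {d : ℕ} {s R : Fin (d+1) → ℕ}
    (X : (∀ i, Fin (s i)) → ℝ) (B : ∀ l, Fin (R l) → Fin (s l) → ℝ) :
    (∀ l, Fin (R l)) → ℝ :=
  fun j => ∑ k : (∀ l, Fin (s l)), X k * ∏ l, B l (j l) (k l)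

/-- Dimensions of `partialContract`: modes in `E` are kept at size `s l`,
the other modes are contracted down to size `R l`. -/
def keepDims {d : ℕ} (s R : Fin (d+1) → ℕ) (E : Finset (Fin (d+1))) : Fin (d+1) → ℕ :=
  fun l => if l ∈ E then s l else R l

/-- Contract every mode `l ∉ E` of `X` with `(A l)ᵀ`; keep the modes in `E` untouched. -/
noncomputable def partialContract {d : ℕ} {s R : Fin (d+1) → ℕ}
    (X : (∀ i, Fin (s i)) → ℝ) (A : ∀ l, Fin (s l) → Fin (R l) → ℝ)
    (E : Finset (Fin (d+1))) : (∀ l, Fin (keepDims s R E l)) → ℝ :=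
  multiProd X (fun l a b =>
    if h : l ∈ E then
      (if b = Fin.cast (show keepDims s R E l = s l by simp [keepDims, h]) a then (1:ℝ) else 0)
    else A l b (Fin.cast (show keepDims s R E l = R l by simp [keepDims, h]) a))

section Aux
open Finset

lemma sum_sq_of_vnorm_one {n : ℕ} {v : Fin n → ℝ} (h : vnorm v = 1) :
    ∑ i, v i ^ 2 = 1 := by
  have h0 : (0:ℝ) ≤ ∑ i, v i ^ 2 := Finset.sum_nonneg fun i _ => sq_nonneg _
  have := congrArg (fun t => t ^ 2) h
  simpa [vnorm, Real.sq_sqrt h0] using this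

lemma vnorm_single {n : ℕ} (i0 : Fin n) :
    vnorm (fun i => if i = i0 then (1:ℝ) else 0) = 1 := by
  unfold vnorm
  rw [show (∑ i, (if i = i0 then (1:ℝ) else 0) ^ 2) = 1 by
    simp [ite_pow, Finset.sum_ite_eq']]
  exact Real.sqrt_one

lemma continuous_vnorm {n : ℕ} : Continuous (vnorm (n := n)) := by
  unfold vnorm
  exact Real.continuous_sqrt.comp
    (continuous_finset_sum _ fun i _ => (continuous_apply i).pow 2)

lemma gmap_congr {d : ℕ} {s : Fin (d+1) → ℕ} (T : (∀ i, Fin (s i)) → ℝ)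
    {x y : ∀ i, Fin (s i) → ℝ} (h : ∀ k : Fin (d+1), k ≠ 0 → x k = y k) :
    gmap T x = gmap T y := by
  funext i
  unfold gmap
  refine Finset.sum_congr rfl fun j _ => ?_
  congr 1
  refine congrArg _ (Finset.prod_congr rfl fun k hk => ?_)
  rw [h k (Finset.ne_of_mem_erase hk)]

end Aux
section Aux2
open Finset

lemma exists_orthogonal_row {n : ℕ} (hn : 0 < n) (x : Fin n → ℝ) (hx : vnorm x = 1) :
    ∃ Q : Fin n → Fin n → ℝ,
      (∀ a b, ∑ c, Q a c * Q b c = if a = b then (1:ℝ) else 0) ∧ Q ⟨0, hn⟩ = x := by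
  classical
  set v : EuclideanSpace ℝ (Fin n) := WithLp.toLp 2 x with hv
  have hvnorm : ‖v‖ = 1 := by
    rw [EuclideanSpace.norm_eq]
    simpa [vnorm, sq_abs] using hx
  have hcard : Module.finrank ℝ (EuclideanSpace ℝ (Fin n)) = Fintype.card (Fin n) := by
    simp [finrank_euclideanSpace]
  have horth : Orthonormal ℝ (Set.restrict ({⟨0, hn⟩} : Set (Fin n)) (fun _ => v)) := by
    constructor
    · intro i; exact hvnorm
    · intro i j hij
      exact absurd (Subtype.ext (by
        have hi := i.2; have hj := j.2
        simp only [Set.mem_singleton_iff] at hi hj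
        rw [hi, hj])) hij
  obtain ⟨b, hb⟩ := horth.exists_orthonormalBasis_extension_of_card_eq hcard
  refine ⟨fun a c => b a c, fun a c => ?_, ?_⟩
  · have := b.orthonormal
    rw [orthonormal_iff_ite] at this
    have h2 := this a c
    rw [PiLp.inner_apply] at h2
    simpa [mul_comm] using h2
  · have h0 : b ⟨0, hn⟩ = v := hb _ rfl
    funext c
    exact congrFun (congrArg (fun (w : EuclideanSpace ℝ (Fin n)) => (w : Fin n → ℝ)) h0) c

end Aux2
section Aux3
open Finset Matrix

/-- Orthonormal rows implies orthonormal columns (square case). -/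
lemma cols_orthonormal {n : ℕ} {M : Fin n → Fin n → ℝ}
    (h : ∀ a b, ∑ c, M a c * M b c = if a = b then (1:ℝ) else 0) :
    ∀ a b, ∑ c, M c a * M c b = if a = b then (1:ℝ) else 0 := by
  classical
  have hM : (Matrix.of M) * (Matrix.of M)ᵀ = 1 := by
    ext a b
    rw [Matrix.mul_apply]
    simpa [Matrix.one_apply] using h a b
  have hM2 : (Matrix.of M)ᵀ * (Matrix.of M) = 1 := mul_eq_one_comm.mp hM
  intro a b
  have := congrFun (congrFun hM2 a) b
  rw [Matrix.mul_apply] at this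
  simpa [Matrix.one_apply, mul_comm] using this

/-- Multiplication by a matrix with orthonormal rows preserves the Euclidean norm
(applied in the form `y ↦ Mᵀ y`). -/
lemma vnorm_transform {n : ℕ} {M : Fin n → Fin n → ℝ}
    (h : ∀ a b, ∑ c, M a c * M b c = if a = b then (1:ℝ) else 0)
    (x : Fin n → ℝ) : vnorm (fun m => ∑ a, M a m * x a) = vnorm x := by
  unfold vnorm
  congr 1
  calc ∑ m, (∑ a, M a m * x a) ^ 2
      = ∑ m, ∑ a, ∑ b, (M a m * x a) * (M b m * x b) := by
        refine Finset.sum_congr rfl fun m _ => ?_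
        rw [sq, Finset.sum_mul_sum]
    _ = ∑ a, ∑ b, ∑ m, (M a m * x a) * (M b m * x b) := by
        rw [Finset.sum_comm]
        exact Finset.sum_congr rfl fun a _ => Finset.sum_comm
    _ = ∑ a, ∑ b, (x a * x b) * ∑ m, M a m * M b m := by
        refine Finset.sum_congr rfl fun a _ => Finset.sum_congr rfl fun b _ => ?_
        rw [Finset.mul_sum]
        exact Finset.sum_congr rfl fun m _ => by ring
    _ = ∑ a, x a ^ 2 := by
        refine Finset.sum_congr rfl fun a _ => ?_
        simp [h, mul_ite, mul_one, mul_zero, Finset.sum_ite_eq, sq]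

end Aux3
section Aux4
open Finset

lemma gmap_multiProd {d : ℕ} {s : Fin (d+1) → ℕ} (T : (∀ i, Fin (s i)) → ℝ)
    (B : ∀ l, Fin (s l) → Fin (s l) → ℝ)
    (hB0 : ∀ a b, B 0 a b = if a = b then (1:ℝ) else 0)
    (x : ∀ i, Fin (s i) → ℝ) :
    gmap (multiProd T B) x = gmap T (fun l m => ∑ a, B l a m * x l a) := by
  classical
  funext i
  set e : ∀ l, Fin (s l) → ℝ := fun l =>
    if h : l = 0 then (fun a => if Fin.cast (congrArg s h) a = i then (1:ℝ) else 0) else x l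
    with he
  have he0 : ∀ a : Fin (s 0), e 0 a = if a = i then (1:ℝ) else 0 := by
    intro a; simp [he]
  have hel : ∀ l : Fin (d+1), l ≠ 0 → e l = x l := by
    intro l hl; simp [he, hl]
  simp only [gmap, multiProd]
  calc (∑ j : (∀ l, Fin (s l)), if j 0 = i then
          (∑ k : (∀ l, Fin (s l)), T k * ∏ l, B l (j l) (k l)) *
            ∏ l ∈ Finset.univ.erase (0 : Fin (d+1)), x l (j l) else 0)
      = ∑ j : (∀ l, Fin (s l)), ∑ k : (∀ l, Fin (s l)),
          T k * ∏ l, (B l (j l) (k l) * e l (j l)) := by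
        refine Finset.sum_congr rfl fun j _ => ?_
        have h1 : (if j 0 = i then
              (∑ k : (∀ l, Fin (s l)), T k * ∏ l, B l (j l) (k l)) *
                ∏ l ∈ Finset.univ.erase (0 : Fin (d+1)), x l (j l) else 0)
            = (if j 0 = i then (1:ℝ) else 0) *
              ((∑ k : (∀ l, Fin (s l)), T k * ∏ l, B l (j l) (k l)) *
                ∏ l ∈ Finset.univ.erase (0 : Fin (d+1)), x l (j l)) := by
          split <;> simp
        rw [h1, Finset.sum_mul, Finset.mul_sum]
        refine Finset.sum_congr rfl fun k _ => ?_
        have hprod : ∏ l, e l (j l)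
            = (if j 0 = i then (1:ℝ) else 0) *
              ∏ l ∈ Finset.univ.erase (0 : Fin (d+1)), x l (j l) := by
          rw [← Finset.mul_prod_erase Finset.univ (fun l => e l (j l)) (Finset.mem_univ 0),
            he0]
          congr 1
          exact Finset.prod_congr rfl fun l hl => by
            rw [hel l (Finset.ne_of_mem_erase hl)]
        rw [Finset.prod_mul_distrib, hprod]
        ring
    _ = ∑ k : (∀ l, Fin (s l)), ∑ j : (∀ l, Fin (s l)),
          T k * ∏ l, (B l (j l) (k l) * e l (j l)) := Finset.sum_comm
    _ = ∑ k : (∀ l, Fin (s l)), T k * ∏ l, (∑ a, B l a (k l) * e l a) := by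
        refine Finset.sum_congr rfl fun k _ => ?_
        have hps := Finset.prod_univ_sum (fun l => (Finset.univ : Finset (Fin (s l))))
          (fun l a => B l a (k l) * e l a)
        rw [Fintype.piFinset_univ] at hps
        rw [← Finset.mul_sum]
        exact congrArg (T k * ·) hps.symm
    _ = ∑ k : (∀ l, Fin (s l)), (if k 0 = i then
          T k * ∏ l ∈ Finset.univ.erase (0 : Fin (d+1)), (∑ a, B l a (k l) * x l a) else 0) := by
        refine Finset.sum_congr rfl fun k _ => ?_
        rw [← Finset.mul_prod_erase Finset.univ (fun l => ∑ a, B l a (k l) * e l a)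
          (Finset.mem_univ 0)]
        have h0 : (∑ a, B 0 a (k 0) * e 0 a) = if k 0 = i then (1:ℝ) else 0 := by
          simp only [he0, hB0]
          simp [ite_mul, Finset.sum_ite_eq']
          exact if_congr eq_comm rfl rfl
        have hrest : ∏ l ∈ Finset.univ.erase (0 : Fin (d+1)), (∑ a, B l a (k l) * e l a)
            = ∏ l ∈ Finset.univ.erase (0 : Fin (d+1)), (∑ a, B l a (k l) * x l a) :=
          Finset.prod_congr rfl fun l hl => by rw [hel l (Finset.ne_of_mem_erase hl)]
        rw [h0, hrest]
        split <;> ring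

end Aux4
section Aux5
open Finset

lemma tinf_attained {d : ℕ} {s : Fin (d+1) → ℕ} (hs : ∀ i, 0 < s i)
    (T : (∀ i, Fin (s i)) → ℝ) :
    ∃ x : ∀ i, Fin (s i) → ℝ, unitInputs x ∧ vnorm (gmap T x) = tinf T := by
  classical
  set A : Set ℝ :=
    {r | ∃ x : (∀ i, Fin (s i) → ℝ), unitInputs x ∧ r = vnorm (gmap T x)} with hA
  set D : ∀ l : Fin (d+1), Set (Fin (s l) → ℝ) := fun l =>
    if l = 0 then {0} else {y | vnorm y = 1} with hD
  set C : Set (∀ l, Fin (s l) → ℝ) := Set.pi Set.univ D with hC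
  have hFcont : Continuous (fun x : ∀ i, Fin (s i) → ℝ => vnorm (gmap T x)) := by
    apply continuous_vnorm.comp
    apply continuous_pi
    intro i
    apply continuous_finset_sum
    intro j _
    by_cases h : j 0 = i
    · simp only [gmap, h, if_true]
      exact continuous_const.mul (continuous_finset_prod _ fun k _ =>
        (continuous_apply (j k)).comp (continuous_apply k))
    · simp only [gmap, h, if_false]
      exact continuous_const
  have hsphere : ∀ l : Fin (d+1), IsCompact {y : Fin (s l) → ℝ | vnorm y = 1} := by
    intro l
    refine IsCompact.of_isClosed_subset (isCompact_closedBall (0 : Fin (s l) → ℝ) 1)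
      (isClosed_singleton.preimage continuous_vnorm) ?_
    intro y hy
    rw [Metric.mem_closedBall, dist_zero_right]
    have h1 : ∑ i, y i ^ 2 = 1 := sum_sq_of_vnorm_one hy
    refine (pi_norm_le_iff_of_nonneg zero_le_one).mpr fun i => ?_
    rw [Real.norm_eq_abs, ← sq_le_one_iff_abs_le_one, ← h1]
    exact Finset.single_le_sum (fun i _ => sq_nonneg (y i)) (Finset.mem_univ i)
  have hDcomp : ∀ l, IsCompact (D l) := by
    intro l
    rw [hD]
    dsimp only
    split
    · exact isCompact_singleton
    · exact hsphere l
  have hCcomp : IsCompact C := isCompact_univ_pi hDcomp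
  have hCne : C.Nonempty := by
    refine ⟨fun l => if h : l = 0 then 0 else (fun i => if i = ⟨0, hs l⟩ then 1 else 0), ?_⟩
    intro l _
    rw [hD]
    dsimp only
    by_cases h : l = 0
    · simp [h]
    · simp only [h, dif_neg, if_neg, not_false_iff]
      exact vnorm_single _
  have hAeq : A = (fun x => vnorm (gmap T x)) '' C := by
    ext r
    constructor
    · rintro ⟨x, hx, rfl⟩
      refine ⟨Function.update x 0 0, ?_, ?_⟩
      · intro l _
        rw [hD]
        dsimp only
        by_cases h : l = 0
        · subst h; simp
        · rw [if_neg h, Function.update_of_ne h]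
          exact hx l h
      · exact congrArg vnorm (gmap_congr T fun k hk => Function.update_of_ne hk 0 x)
    · rintro ⟨x, hxC, rfl⟩
      refine ⟨x, ?_, rfl⟩
      intro l hl
      have h2 := hxC l (Set.mem_univ l)
      rw [hD] at h2
      dsimp only at h2
      rw [if_neg hl] at h2
      exact h2
  have hAcomp : IsCompact A := hAeq ▸ hCcomp.image hFcont
  have hAne : A.Nonempty := hAeq ▸ hCne.image _
  have hmem := hAcomp.sInf_mem hAne
  obtain ⟨x, hx, hr⟩ := hmem
  exact ⟨x, hx, hr.symm⟩

end Aux5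
section Aux6
open Finset

lemma transform_inv {n : ℕ} {M : Fin n → Fin n → ℝ}
    (hcols : ∀ a b, ∑ c, M c a * M c b = if a = b then (1:ℝ) else 0) (y : Fin n → ℝ) :
    (fun m => ∑ a, M a m * ∑ m', M a m' * y m') = y := by
  funext m
  calc ∑ a, M a m * ∑ m', M a m' * y m'
      = ∑ a, ∑ m', M a m * (M a m' * y m') := by
        exact Finset.sum_congr rfl fun a _ => Finset.mul_sum _ _ _
    _ = ∑ m', ∑ a, M a m * (M a m' * y m') := Finset.sum_comm
    _ = ∑ m', y m' * ∑ a, M a m * M a m' := by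
        refine Finset.sum_congr rfl fun m' _ => ?_
        rw [Finset.mul_sum]
        exact Finset.sum_congr rfl fun a _ => by ring
    _ = y m := by
        simp [hcols, mul_ite, mul_one, mul_zero, Finset.sum_ite_eq]

end Aux6

/-- Theorem A.3 of the paper. For any order-`N` tensor `T` (`N = d+1 ≥ 2`,
mode `0` output) there are orthogonal matrices `Q l` (at the input modes `l ≠ 0`) such that
`V = T ×₂ Q₂ ⋯ ×_N Q_N` (identity at mode `0`) has `‖V‖₂ = ‖T‖₂`, `I(V) = I(T)`
(hence `κ(V) = κ(T)`), and the first fiber `v(i) = V(i,1,…,1)` has `‖v‖₂ = I(T)`. -/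
theorem exists_orthogonal_fiber_attains_inf {d : ℕ} (hd : 1 ≤ d)
    {s : Fin (d+1) → ℕ} (hs : ∀ i, 0 < s i)
    (T : (∀ i, Fin (s i)) → ℝ) :
    ∃ Q : ∀ l : Fin (d+1), Fin (s l) → Fin (s l) → ℝ,
      (∀ l : Fin (d+1), l ≠ 0 →
        ∀ a b : Fin (s l), ∑ c, Q l a c * Q l b c = if a = b then (1:ℝ) else 0) ∧
      tnorm (multiProd T
        (fun l a b => if l = 0 then (if a = b then (1:ℝ) else 0) else Q l a b)) = tnorm T ∧
      tinf (multiProd T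
        (fun l a b => if l = 0 then (if a = b then (1:ℝ) else 0) else Q l a b)) = tinf T ∧
      tcond (multiProd T
        (fun l a b => if l = 0 then (if a = b then (1:ℝ) else 0) else Q l a b)) = tcond T ∧
      vnorm (fun i : Fin (s 0) =>
        multiProd T (fun l a b => if l = 0 then (if a = b then (1:ℝ) else 0) else Q l a b)
          (fun l => if h : l = 0 then Fin.cast (congrArg s h.symm) i else ⟨0, hs l⟩)) =
        tinf T := by
  classical
  obtain ⟨xm, hxm, hxmval⟩ := tinf_attained hs T
  have hchoice : ∀ l : Fin (d+1), ∃ Q : Fin (s l) → Fin (s l) → ℝ,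
      (∀ a b, ∑ c, Q a c * Q b c = if a = b then (1:ℝ) else 0) ∧
      (l ≠ 0 → Q ⟨0, hs l⟩ = xm l) := by
    intro l
    by_cases h : l = 0
    · refine ⟨fun a b => if a = b then 1 else 0, fun a b => ?_, fun h' => absurd h h'⟩
      simp [ite_mul, Finset.sum_ite_eq']
    · obtain ⟨Q, hQ1, hQ2⟩ := exists_orthogonal_row (hs l) (xm l) (hxm l h)
      exact ⟨Q, hQ1, fun _ => hQ2⟩
  choose Q hQorth hQrow using hchoice
  refine ⟨Q, fun l _ => hQorth l, ?_⟩
  set B : ∀ l : Fin (d+1), Fin (s l) → Fin (s l) → ℝ :=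
    fun l a b => if l = 0 then (if a = b then (1:ℝ) else 0) else Q l a b with hB
  have hB0 : ∀ a b : Fin (s 0), B 0 a b = if a = b then (1:ℝ) else 0 := by
    intro a b; simp [hB]
  have hBrows : ∀ l : Fin (d+1), ∀ a b, ∑ c, B l a c * B l b c = if a = b then (1:ℝ) else 0 := by
    intro l a b
    by_cases h : l = 0
    · subst h
      simp only [hB0]
      simp [ite_mul, Finset.sum_ite_eq']
    · simp only [hB, if_neg h]
      exact hQorth l a b
  have hBcols : ∀ l : Fin (d+1), ∀ a b, ∑ c, B l c a * B l c b = if a = b then (1:ℝ) else 0 :=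
    fun l => cols_orthonormal (hBrows l)
  have hset : {r | ∃ x : (∀ i, Fin (s i) → ℝ), unitInputs x ∧ r = vnorm (gmap (multiProd T B) x)}
      = {r | ∃ x : (∀ i, Fin (s i) → ℝ), unitInputs x ∧ r = vnorm (gmap T x)} := by
    ext r
    constructor
    · rintro ⟨x, hx, rfl⟩
      refine ⟨fun l m => ∑ a, B l a m * x l a, ?_, ?_⟩
      · intro l hl
        exact (vnorm_transform (hBrows l) (x l)).trans (hx l hl)
      · exact congrArg vnorm (gmap_multiProd T B hB0 x)
    · rintro ⟨y, hy, rfl⟩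
      refine ⟨fun l a => ∑ m, B l a m * y l m, ?_, ?_⟩
      · intro l hl
        exact (vnorm_transform (M := fun a c => B l c a) (hBcols l) (y l)).trans (hy l hl)
      · rw [gmap_multiProd T B hB0]
        refine congrArg vnorm (gmap_congr T fun l _ => ?_).symm
        exact transform_inv (hBcols l) (y l)
  have htnorm : tnorm (multiProd T B) = tnorm T := by
    unfold tnorm; rw [hset]
  have htinf : tinf (multiProd T B) = tinf T := by
    unfold tinf; rw [hset]
  refine ⟨htnorm, htinf, by unfold tcond; rw [htnorm, htinf], ?_⟩
  have hfiber : (fun i : Fin (s 0) => multiProd T B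
      (fun l => if h : l = 0 then Fin.cast (congrArg s h.symm) i else ⟨0, hs l⟩)) = gmap T xm := by
    funext i
    simp only [multiProd, gmap]
    refine Finset.sum_congr rfl fun k _ => ?_
    have hsplit : (∏ l, B l ((fun l => if h : l = 0 then Fin.cast (congrArg s h.symm) i
          else ⟨0, hs l⟩) l) (k l))
        = B 0 i (k 0) * ∏ l ∈ Finset.univ.erase (0 : Fin (d+1)), xm l (k l) := by
      rw [← Finset.mul_prod_erase Finset.univ _ (Finset.mem_univ (0 : Fin (d+1)))]
      refine congrArg₂ (· * ·) ?_ ?_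
      · have hj0 : (if h : (0:Fin (d+1)) = 0 then Fin.cast (congrArg s h.symm) i
            else ⟨0, hs 0⟩) = i := by simp
        exact congrArg (fun t => B 0 t (k 0)) hj0
      · refine Finset.prod_congr rfl fun l hl => ?_
        have hl0 := Finset.ne_of_mem_erase hl
        show B l (if h : l = 0 then Fin.cast (congrArg s h.symm) i else ⟨0, hs l⟩) (k l)
          = xm l (k l)
        rw [dif_neg hl0]
        simp only [hB, if_neg hl0]
        exact congrFun (hQrow l hl0) (k l)
    rw [hsplit]
    have hb : B 0 i (k 0) = if k 0 = i then (1:ℝ) else 0 := by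
      rw [hB0]
      exact if_congr eq_comm rfl rfl
    rw [hb]
    split <;> ring
  rw [hfiber, hxmval]
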